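/- Let G be the context-free grammar (derivation) on variables {x,y} with D_G(x) = y and D_G(y) = y. Then for n ≥ 1, (x·D_G)^n(y) = Σ_{i=1}^{n} A(n,i) x^{n+1-i} y^i, where A(n,i) are the Eulerian numbers. -/

import Mathlib

/-- Number of descents of a permutation of `Fin n`, with the last index always a descent. -/
def des (n : ℕ) (π : Equiv.Perm (Fin n)) : ℕ :=
  (Finset.univ.filter (fun i : Fin n =>
    (if h : (i : ℕ) + 1 < n then (((π ⟨(i : ℕ) + 1, h⟩ : Fin n) : ℕ) : ℤ) else (-1 : ℤ))
      < (((π i : Fin n) : ℕ) : ℤ))).card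

/-- The Eulerian number `A(n,i) = #{π ∈ S_n : des π = i}`. -/
def eulerianNum (n i : ℕ) : ℕ :=
  (Finset.univ.filter (fun π : Equiv.Perm (Fin n) => des n π = i)).card

section GrammarAux
open Finset Equiv

theorem Equiv.Perm.apply_inv_self {α : Type*} (f : Equiv.Perm α) (x : α) : f (f⁻¹ x) = x :=
  f.apply_symm_apply x

def dCond (n : ℕ) (π : Equiv.Perm (Fin n)) (i : Fin n) : Prop :=
  (if h : (i : ℕ) + 1 < n then (((π ⟨(i : ℕ) + 1, h⟩ : Fin n) : ℕ) : ℤ) else (-1 : ℤ))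
    < (((π i : Fin n) : ℕ) : ℤ)

instance (n : ℕ) (π : Equiv.Perm (Fin n)) : DecidablePred (dCond n π) := fun i => by
  unfold dCond; infer_instance

lemma des_eq (n : ℕ) (π : Equiv.Perm (Fin n)) :
    des n π = (univ.filter (dCond n π)).card := rfl

def delFun {n : ℕ} (π : Equiv.Perm (Fin (n+1))) (i : Fin n) : Fin n :=
  (π ((π⁻¹ (Fin.last n)).succAbove i)).castPred (by
    intro h
    have h2 : π ((π⁻¹ (Fin.last n)).succAbove i) = π (π⁻¹ (Fin.last n)) := by
      rw [π.apply_inv_self]; exact h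
    exact Fin.succAbove_ne _ i (π.injective h2))

lemma delFun_injective {n : ℕ} (π : Equiv.Perm (Fin (n+1))) :
    Function.Injective (delFun π) := by
  intro i j h
  unfold delFun at h
  rw [Fin.castPred_inj] at h
  exact Fin.succAbove_right_injective (π.injective h)

noncomputable def del {n : ℕ} (π : Equiv.Perm (Fin (n+1))) : Equiv.Perm (Fin n) :=
  Equiv.ofBijective (delFun π) (Finite.injective_iff_bijective.mp (delFun_injective π))

lemma castSucc_del {n : ℕ} (π : Equiv.Perm (Fin (n+1))) (i : Fin n) :
    Fin.castSucc (del π i) = π ((π⁻¹ (Fin.last n)).succAbove i) := by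
  rw [show del π i = delFun π i from rfl, delFun, Fin.castSucc_castPred]

noncomputable def Phi {n : ℕ} (π : Equiv.Perm (Fin (n+1))) : Equiv.Perm (Fin n) × Fin (n+1) :=
  (del π, π⁻¹ (Fin.last n))

lemma Phi_bijective {n : ℕ} : Function.Bijective (Phi (n := n)) := by
  rw [Fintype.bijective_iff_injective_and_card]
  constructor
  · intro π π' h
    have hp : π⁻¹ (Fin.last n) = π'⁻¹ (Fin.last n) := congrArg Prod.snd h
    have hd : del π = del π' := congrArg Prod.fst h
    apply Equiv.ext
    intro j
    rcases eq_or_ne j (π⁻¹ (Fin.last n)) with rfl | hj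
    · rw [π.apply_inv_self, hp, π'.apply_inv_self]
    · obtain ⟨i, rfl⟩ := Fin.exists_succAbove_eq hj
      rw [← castSucc_del π, hd, hp]
      exact castSucc_del π' i
  · simp [Fintype.card_perm, Fintype.card_fin, Nat.factorial_succ, Nat.mul_comm]

variable {n : ℕ} (π : Equiv.Perm (Fin (n+1)))

lemma cond_p : dCond (n+1) π (π⁻¹ (Fin.last n)) := by
  set p := π⁻¹ (Fin.last n) with hp
  have h4 : ((π p : Fin (n+1)) : ℕ) = n := by rw [hp, π.apply_inv_self]; rfl
  unfold dCond
  by_cases h : (p : ℕ) + 1 < n + 1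
  · rw [dif_pos h]
    have hne : (⟨(p:ℕ)+1, h⟩ : Fin (n+1)) ≠ p := by
      intro hc; have := congrArg Fin.val hc; simp at this
    have h2 : π ⟨(p:ℕ)+1, h⟩ ≠ Fin.last n := by
      intro hc
      exact hne (π.injective (by rw [hc, hp, π.apply_inv_self]))
    have h3 : ((π ⟨(p:ℕ)+1, h⟩ : Fin (n+1)) : ℕ) < n := by
      have h5 := Fin.is_le (π ⟨(p:ℕ)+1, h⟩)
      rcases lt_or_eq_of_le h5 with h4 | h4
      · exact h4
      · exact absurd (Fin.ext h4) h2
    omega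
  · rw [dif_neg h]
    omega

lemma cond_sa (σ : Equiv.Perm (Fin n))
    (hσ : ∀ j : Fin n, ((π ((π⁻¹ (Fin.last n)).succAbove j) : Fin (n+1)) : ℕ) = ((σ j : Fin n) : ℕ))
    (i : Fin n) :
    dCond (n+1) π ((π⁻¹ (Fin.last n)).succAbove i)
      ↔ (dCond n σ i ∧ ((π⁻¹ (Fin.last n) : Fin (n+1)) : ℕ) ≠ (i:ℕ)+1) := by
  set p := π⁻¹ (Fin.last n) with hp
  have hplast : ((π p : Fin (n+1)) : ℕ) = n := by rw [hp, π.apply_inv_self]; rfl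
  clear_value p
  rcases lt_or_ge (Fin.castSucc i) p with hip | hip
  · -- j = castSucc i, val i
    have hj : p.succAbove i = Fin.castSucc i := Fin.succAbove_of_castSucc_lt _ _ hip
    have hlt : (i:ℕ) < (p:ℕ) := by rwa [Fin.lt_def, Fin.coe_castSucc] at hip
    have hin : (i:ℕ) + 1 < n + 1 := by have := Fin.is_le p; omega
    by_cases h1 : (p:ℕ) = (i:ℕ) + 1
    · -- cut case: both sides false
      constructor
      · intro hc
        exfalso
        unfold dCond at hc
        rw [hj] at hc
        rw [dif_pos (by simpa using hin)] at hc
        have he : (⟨((Fin.castSucc i : Fin (n+1)):ℕ)+1, by simpa using hin⟩ : Fin (n+1)) = p := by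
          apply Fin.ext; simp [h1]
        rw [he] at hc
        have := hσ i
        rw [hj] at this
        rw [hplast, this] at hc
        have h6 : ((σ i : Fin n) : ℕ) < n := (σ i).isLt
        omega
      · rintro ⟨-, hc⟩; exact absurd h1 hc
    · have h2 : (i:ℕ) + 1 < (p:ℕ) := by omega
      have h3 : (i:ℕ) + 1 < n := by have := Fin.is_le p; omega
      set i' : Fin n := ⟨(i:ℕ)+1, h3⟩ with hi'
      have hj' : p.succAbove i' = Fin.castSucc i' := by
        apply Fin.succAbove_of_castSucc_lt
        rw [Fin.lt_def, Fin.coe_castSucc]; exact h2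
      have hv : ((π (Fin.castSucc i') : Fin (n+1)) : ℕ) = ((σ i' : Fin n) : ℕ) := by
        rw [← hj']; exact hσ i'
      have hvi : ((π (Fin.castSucc i) : Fin (n+1)) : ℕ) = ((σ i : Fin n) : ℕ) := by
        rw [← hj]; exact hσ i
      unfold dCond
      rw [hj, dif_pos (by simpa using hin), dif_pos h3]
      have he : (⟨((Fin.castSucc i : Fin (n+1)):ℕ)+1, by simpa using hin⟩ : Fin (n+1))
          = Fin.castSucc i' := by apply Fin.ext; simp [hi']
      rw [he]
      have he2 : (⟨(i:ℕ)+1, h3⟩ : Fin n) = i' := rfl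
      rw [he2, hv, hvi]
      simp only [iff_self_and]
      intro _
      show ((p : Fin (n+1)) : ℕ) ≠ (i:ℕ)+1
      omega
  · -- j = succ i, val i+1
    have hj : p.succAbove i = Fin.succ i := Fin.succAbove_of_le_castSucc _ _ hip
    have hle : (p:ℕ) ≤ (i:ℕ) := by rwa [Fin.le_def, Fin.coe_castSucc] at hip
    have hvi : ((π (Fin.succ i) : Fin (n+1)) : ℕ) = ((σ i : Fin n) : ℕ) := by
      rw [← hj]; exact hσ i
    have hne : ((p : Fin (n+1)) : ℕ) ≠ (i:ℕ)+1 := by omega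
    by_cases h3 : (i:ℕ) + 1 < n
    · set i' : Fin n := ⟨(i:ℕ)+1, h3⟩ with hi'
      have hj' : p.succAbove i' = Fin.succ i' := by
        apply Fin.succAbove_of_le_castSucc
        rw [Fin.le_def, Fin.coe_castSucc]
        show (p:ℕ) ≤ (i:ℕ)+1
        omega
      have hv : ((π (Fin.succ i') : Fin (n+1)) : ℕ) = ((σ i' : Fin n) : ℕ) := by
        rw [← hj']; exact hσ i'
      unfold dCond
      rw [hj, dif_pos (by simp; omega), dif_pos h3]
      have he : (⟨((Fin.succ i : Fin (n+1)):ℕ)+1, by simp; omega⟩ : Fin (n+1))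
          = Fin.succ i' := by apply Fin.ext; simp [hi']
      rw [he]
      have he2 : (⟨(i:ℕ)+1, h3⟩ : Fin n) = i' := rfl
      rw [he2, hv, hvi]
      simp only [iff_self_and]
      intro _
      show ((p : Fin (n+1)) : ℕ) ≠ (i:ℕ)+1
      omega
    · -- i last index
      unfold dCond
      rw [hj, dif_neg (by simp; omega), dif_neg h3, hvi]
      constructor
      · intro h; exact ⟨h, hne⟩
      · rintro ⟨h, -⟩; exact h

lemma des_formula :
    des (n+1) π = 1 + (univ.filter (fun i : Fin n =>
      dCond n (del π) i ∧ ((π⁻¹ (Fin.last n) : Fin (n+1)) : ℕ) ≠ (i:ℕ)+1)).card := by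
  have hσ : ∀ j : Fin n,
      ((π ((π⁻¹ (Fin.last n)).succAbove j) : Fin (n+1)) : ℕ) = ((del π j : Fin n) : ℕ) := by
    intro j
    rw [← castSucc_del π j, Fin.coe_castSucc]
  rw [des_eq, Finset.card_filter, Finset.card_filter,
    Fin.sum_univ_succAbove _ (π⁻¹ (Fin.last n))]
  congr 1
  · rw [if_pos (cond_p π)]
  · apply Finset.sum_congr rfl
    intro i _
    congr 1
    rw [eq_iff_iff]
    exact cond_sa π (del π) hσ i

lemma count_p (σ : Equiv.Perm (Fin n)) (k : ℕ) :
    (univ.filter (fun p : Fin (n+1) =>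
      1 + (univ.filter (fun i : Fin n =>
        dCond n σ i ∧ ((p : Fin (n+1)) : ℕ) ≠ (i:ℕ)+1)).card = k)).card
    = (if des n σ = k then k else 0)
      + (if des n σ + 1 = k then n + 1 - des n σ else 0) := by
  classical
  set S := univ.filter (dCond n σ) with hS
  set T := S.image Fin.succ with hT
  have hd : des n σ = S.card := des_eq n σ
  have hTcard : T.card = S.card :=
    Finset.card_image_of_injective _ (Fin.succ_injective n)
  have key1 : ∀ p : Fin (n+1), p ∈ T →
      (1 ≤ S.card ∧ (univ.filter (fun i : Fin n =>
        dCond n σ i ∧ ((p : Fin (n+1)) : ℕ) ≠ (i:ℕ)+1)).card = S.card - 1) := by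
    intro p hp
    rw [hT, Finset.mem_image] at hp
    obtain ⟨i₀, hi₀, rfl⟩ := hp
    constructor
    · exact Finset.card_pos.mpr ⟨i₀, hi₀⟩
    · have : (univ.filter (fun i : Fin n =>
          dCond n σ i ∧ ((Fin.succ i₀ : Fin (n+1)) : ℕ) ≠ (i:ℕ)+1)) = S.erase i₀ := by
        ext i
        simp only [Finset.mem_filter, Finset.mem_univ, true_and, Finset.mem_erase, hS,
          Fin.val_succ]
        constructor
        · rintro ⟨h1, h2⟩
          refine ⟨fun hc => h2 (by rw [hc]), by simp [h1]⟩
        · rintro ⟨h1, h2⟩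
          exact ⟨h2, fun hc => h1 (Fin.ext (by omega))⟩
      rw [this, Finset.card_erase_of_mem hi₀]
  have key2 : ∀ p : Fin (n+1), p ∉ T →
      (univ.filter (fun i : Fin n =>
        dCond n σ i ∧ ((p : Fin (n+1)) : ℕ) ≠ (i:ℕ)+1)).card = S.card := by
    intro p hp
    congr 1
    ext i
    simp only [Finset.mem_filter, Finset.mem_univ, true_and, hS]
    constructor
    · rintro ⟨h1, -⟩; exact h1
    · intro h1
      refine ⟨h1, fun hc => hp ?_⟩
      rw [hT, Finset.mem_image]
      exact ⟨i, by simpa [hS] using h1, Fin.ext (by simp [hc])⟩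
  by_cases hk : S.card = k
  · have hk1 : ¬ (S.card + 1 = k) := by omega
    rw [hd, if_pos hk, if_neg (by omega)]
    have : (univ.filter (fun p : Fin (n+1) =>
        1 + (univ.filter (fun i : Fin n =>
          dCond n σ i ∧ ((p : Fin (n+1)) : ℕ) ≠ (i:ℕ)+1)).card = k)) = T := by
      ext p
      simp only [Finset.mem_filter, Finset.mem_univ, true_and]
      constructor
      · intro h
        by_contra hc
        rw [key2 p hc] at h
        omega
      · intro h
        obtain ⟨h1, h2⟩ := key1 p h
        rw [h2]
        omega
    rw [this, hTcard]
    omega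
  · by_cases hk1 : S.card + 1 = k
    · rw [hd, if_neg hk, if_pos hk1]
      have : (univ.filter (fun p : Fin (n+1) =>
          1 + (univ.filter (fun i : Fin n =>
            dCond n σ i ∧ ((p : Fin (n+1)) : ℕ) ≠ (i:ℕ)+1)).card = k)) = Tᶜ := by
        ext p
        simp only [Finset.mem_filter, Finset.mem_univ, true_and, Finset.mem_compl]
        constructor
        · intro h hc
          obtain ⟨h1, h2⟩ := key1 p hc
          rw [h2] at h
          omega
        · intro h
          rw [key2 p h]
          omega
      rw [this, Finset.card_compl, hTcard]
      simp only [Fintype.card_fin]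
      omega
    · rw [hd, if_neg hk, if_neg hk1, Finset.card_eq_zero]
      rw [Finset.filter_eq_empty_iff]
      intro p _
      by_cases hp : p ∈ T
      · obtain ⟨h1, h2⟩ := key1 p hp
        rw [h2]
        omega
      · rw [key2 p hp]
        omega

lemma eulerian_rec (n k : ℕ) :
    eulerianNum (n+1) (k+1) = (k+1) * eulerianNum n (k+1) + (n+1-k) * eulerianNum n k := by
  classical
  set e : Equiv.Perm (Fin (n+1)) ≃ (Equiv.Perm (Fin n) × Fin (n+1)) :=
    Equiv.ofBijective Phi Phi_bijective with he
  have hPhi : ∀ π : Equiv.Perm (Fin (n+1)), e π = Phi π := fun _ => rfl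
  have hcomp : ∀ q : Equiv.Perm (Fin n) × Fin (n+1),
      del (e.symm q) = q.1 ∧ (e.symm q)⁻¹ (Fin.last n) = q.2 := by
    intro q
    have h1 : Phi (e.symm q) = q := by rw [← hPhi, e.apply_symm_apply]
    exact ⟨congrArg Prod.fst h1, congrArg Prod.snd h1⟩
  have step1 : eulerianNum (n+1) (k+1)
      = (univ.filter (fun q : Equiv.Perm (Fin n) × Fin (n+1) =>
          des (n+1) (e.symm q) = k+1)).card := by
    rw [eulerianNum]
    apply Finset.card_equiv e
    intro π
    simp only [Finset.mem_filter, Finset.mem_univ, true_and, Equiv.symm_apply_apply]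
  rw [step1]
  have step2 : ∀ q : Equiv.Perm (Fin n) × Fin (n+1),
      des (n+1) (e.symm q)
        = 1 + (univ.filter (fun i : Fin n =>
            dCond n q.1 i ∧ ((q.2 : Fin (n+1)) : ℕ) ≠ (i:ℕ)+1)).card := by
    intro q
    rw [des_formula (e.symm q), (hcomp q).1, (hcomp q).2]
  have step3 : (univ.filter (fun q : Equiv.Perm (Fin n) × Fin (n+1) =>
          des (n+1) (e.symm q) = k+1)).card
      = ∑ σ : Equiv.Perm (Fin n), (univ.filter (fun p : Fin (n+1) =>
          1 + (univ.filter (fun i : Fin n =>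
            dCond n σ i ∧ ((p : Fin (n+1)) : ℕ) ≠ (i:ℕ)+1)).card = k+1)).card := by
    rw [Finset.card_filter]
    rw [Fintype.sum_prod_type]
    apply Finset.sum_congr rfl
    intro σ _
    rw [Finset.card_filter]
    apply Finset.sum_congr rfl
    intro p _
    rw [step2 (σ, p)]
  rw [step3]
  have step4 : ∀ σ : Equiv.Perm (Fin n),
      (univ.filter (fun p : Fin (n+1) =>
          1 + (univ.filter (fun i : Fin n =>
            dCond n σ i ∧ ((p : Fin (n+1)) : ℕ) ≠ (i:ℕ)+1)).card = k+1)).card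
      = (if des n σ = k+1 then k+1 else 0) + (if des n σ = k then n+1-k else 0) := by
    intro σ
    rw [count_p σ (k+1)]
    congr 1
    by_cases h : des n σ = k
    · rw [if_pos h, if_pos (by omega), h]
    · rw [if_neg h, if_neg (by omega)]
  calc ∑ σ : Equiv.Perm (Fin n), (univ.filter (fun p : Fin (n+1) =>
          1 + (univ.filter (fun i : Fin n =>
            dCond n σ i ∧ ((p : Fin (n+1)) : ℕ) ≠ (i:ℕ)+1)).card = k+1)).card
      = ∑ σ : Equiv.Perm (Fin n),
          ((if des n σ = k+1 then k+1 else 0) + (if des n σ = k then n+1-k else 0)) :=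
        Finset.sum_congr rfl (fun σ _ => step4 σ)
    _ = (∑ σ : Equiv.Perm (Fin n), (if des n σ = k+1 then k+1 else 0))
        + (∑ σ : Equiv.Perm (Fin n), (if des n σ = k then n+1-k else 0)) :=
        Finset.sum_add_distrib
    _ = (k+1) * eulerianNum n (k+1) + (n+1-k) * eulerianNum n k := by
        rw [eulerianNum, eulerianNum, ← Finset.sum_filter, ← Finset.sum_filter,
          Finset.sum_const, Finset.sum_const, smul_eq_mul, smul_eq_mul,
          mul_comm, mul_comm ((univ.filter (fun π : Equiv.Perm (Fin n) => des n π = k)).card)]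

lemma des_pos (m : ℕ) (π : Equiv.Perm (Fin (m+1))) : 1 ≤ des (m+1) π := by
  rw [des_eq]
  apply Finset.card_pos.mpr
  refine ⟨Fin.last m, ?_⟩
  rw [Finset.mem_filter]
  refine ⟨Finset.mem_univ _, ?_⟩
  unfold dCond
  rw [dif_neg (by simp)]
  omega

lemma des_le (m : ℕ) (π : Equiv.Perm (Fin m)) : des m π ≤ m := by
  rw [des_eq]
  calc (univ.filter (dCond m π)).card ≤ (univ : Finset (Fin m)).card :=
        Finset.card_filter_le _ _
    _ = m := by simp

lemma eulerian_zero (m : ℕ) : eulerianNum (m+1) 0 = 0 := by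
  rw [eulerianNum, Finset.card_eq_zero, Finset.filter_eq_empty_iff]
  intro π _
  have := des_pos m π
  omega

lemma eulerian_gt (m i : ℕ) (h : m < i) : eulerianNum m i = 0 := by
  rw [eulerianNum, Finset.card_eq_zero, Finset.filter_eq_empty_iff]
  intro π _
  have := des_le m π
  omega

lemma eulerian_one : eulerianNum 1 1 = 1 := by decide

lemma step_poly (d : Derivation ℚ (MvPolynomial (Fin 2) ℚ) (MvPolynomial (Fin 2) ℚ))
    (hx : d (MvPolynomial.X 0) = MvPolynomial.X 1)
    (hy : d (MvPolynomial.X 1) = MvPolynomial.X 1)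
    (a b : ℕ) :
    MvPolynomial.X 0 * d (MvPolynomial.X 0 ^ (a+1) * MvPolynomial.X 1 ^ (b+1))
      = (a+1) • (MvPolynomial.X 0 ^ (a+1) * MvPolynomial.X 1 ^ (b+2))
        + (b+1) • (MvPolynomial.X 0 ^ (a+2) * MvPolynomial.X 1 ^ (b+1)) := by
  rw [Derivation.leibniz, Derivation.leibniz_pow, Derivation.leibniz_pow, hx, hy]
  simp only [smul_eq_mul, nsmul_eq_mul, Nat.add_sub_cancel]
  push_cast
  ring

lemma inductive_step (d : Derivation ℚ (MvPolynomial (Fin 2) ℚ) (MvPolynomial (Fin 2) ℚ))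
    (hx : d (MvPolynomial.X 0) = MvPolynomial.X 1)
    (hy : d (MvPolynomial.X 1) = MvPolynomial.X 1)
    (n : ℕ) (hn : 1 ≤ n) :
    MvPolynomial.X 0 * d (∑ i ∈ Finset.Icc 1 n,
        (eulerianNum n i : MvPolynomial (Fin 2) ℚ)
          * MvPolynomial.X 0 ^ (n + 1 - i) * MvPolynomial.X 1 ^ i)
      = ∑ k ∈ Finset.Icc 1 (n+1), (eulerianNum (n+1) k : MvPolynomial (Fin 2) ℚ)
          * MvPolynomial.X 0 ^ (n + 1 + 1 - k) * MvPolynomial.X 1 ^ k := by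
  have key : ∀ i, 1 ≤ i → i ≤ n →
      MvPolynomial.X 0 * d (MvPolynomial.X 0 ^ (n+1-i) * MvPolynomial.X 1 ^ i)
        = (n+1-i) • (MvPolynomial.X 0 ^ (n+1-i) * MvPolynomial.X 1 ^ (i+1))
          + i • (MvPolynomial.X 0 ^ (n+2-i) * MvPolynomial.X 1 ^ i) := by
    intro i h1 h2
    obtain ⟨b, rfl⟩ : ∃ b, i = b + 1 := ⟨i - 1, by omega⟩
    have ha : n + 1 - (b+1) = (n - (b+1)) + 1 := by omega
    have ha2 : n + 2 - (b+1) = (n - (b+1)) + 2 := by omega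
    rw [ha, ha2, step_poly d hx hy (n - (b+1)) b, ← ha]
  -- rewrite LHS into a sum of smul terms
  have lhs_eq : MvPolynomial.X 0 * d (∑ i ∈ Finset.Icc 1 n,
        (eulerianNum n i : MvPolynomial (Fin 2) ℚ)
          * MvPolynomial.X 0 ^ (n + 1 - i) * MvPolynomial.X 1 ^ i)
      = ∑ i ∈ Finset.Icc 1 n,
          ((eulerianNum n i * (n+1-i)) •
            (MvPolynomial.X 0 ^ (n+1-i) * MvPolynomial.X 1 ^ (i+1))
          + (eulerianNum n i * i) •
            (MvPolynomial.X 0 ^ (n+2-i) * MvPolynomial.X 1 ^ i)) := by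
    have hterm : ∀ i, ((eulerianNum n i : MvPolynomial (Fin 2) ℚ)
        * MvPolynomial.X 0 ^ (n + 1 - i) * MvPolynomial.X 1 ^ i)
        = (eulerianNum n i) • (MvPolynomial.X 0 ^ (n+1-i) * MvPolynomial.X 1 ^ i) := by
      intro i
      rw [nsmul_eq_mul, mul_assoc]
    simp only [hterm]
    rw [map_sum, Finset.mul_sum]
    apply Finset.sum_congr rfl
    intro i hi
    rw [Finset.mem_Icc] at hi
    rw [← Nat.cast_smul_eq_nsmul ℚ, Derivation.map_smul, Nat.cast_smul_eq_nsmul,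
      mul_smul_comm, key i hi.1 hi.2, smul_add, smul_smul, smul_smul]
  rw [lhs_eq, Finset.sum_add_distrib]
  -- first sum: reindex k = i+1
  have sum1 : (∑ i ∈ Finset.Icc 1 n, (eulerianNum n i * (n+1-i)) •
        (MvPolynomial.X 0 ^ (n+1-i) * MvPolynomial.X 1 ^ (i+1) : MvPolynomial (Fin 2) ℚ))
      = ∑ k ∈ Finset.Icc 2 (n+1), (eulerianNum n (k-1) * (n+2-k)) •
        (MvPolynomial.X 0 ^ (n+2-k) * MvPolynomial.X 1 ^ k) := by
    have hmap : Finset.Icc 2 (n+1) = Finset.map (addRightEmbedding 1) (Finset.Icc 1 n) := by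
      rw [Finset.map_add_right_Icc]
    rw [hmap, Finset.sum_map]
    apply Finset.sum_congr rfl
    intro i hi
    rw [Finset.mem_Icc] at hi
    simp only [addRightEmbedding_apply]
    have h1 : i + 1 - 1 = i := by omega
    have h2 : n + 2 - (i+1) = n + 1 - i := by omega
    rw [h1, h2]
  -- extend first sum to Icc 1 (n+1)
  have ins1 : Finset.Icc 1 (n+1) = insert 1 (Finset.Icc 2 (n+1)) := by
    ext x
    simp only [Finset.mem_Icc, Finset.mem_insert]
    omega
  have ins2 : Finset.Icc 1 (n+1) = insert (n+1) (Finset.Icc 1 n) := by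
    ext x
    simp only [Finset.mem_Icc, Finset.mem_insert]
    omega
  obtain ⟨m, rfl⟩ : ∃ m, n = m + 1 := ⟨n - 1, by omega⟩
  have ext1 : (∑ k ∈ Finset.Icc 2 (m+1+1), (eulerianNum (m+1) (k-1) * (m+1+2-k)) •
        (MvPolynomial.X 0 ^ (m+1+2-k) * MvPolynomial.X 1 ^ k : MvPolynomial (Fin 2) ℚ))
      = ∑ k ∈ Finset.Icc 1 (m+1+1), (eulerianNum (m+1) (k-1) * (m+1+2-k)) •
        (MvPolynomial.X 0 ^ (m+1+2-k) * MvPolynomial.X 1 ^ k) := by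
    rw [ins1, Finset.sum_insert (by simp)]
    rw [show (1:ℕ) - 1 = 0 from rfl, eulerian_zero m, zero_mul, zero_smul, zero_add]
  have ext2 : (∑ i ∈ Finset.Icc 1 (m+1), (eulerianNum (m+1) i * i) •
        (MvPolynomial.X 0 ^ (m+1+2-i) * MvPolynomial.X 1 ^ i : MvPolynomial (Fin 2) ℚ))
      = ∑ k ∈ Finset.Icc 1 (m+1+1), (eulerianNum (m+1) k * k) •
        (MvPolynomial.X 0 ^ (m+1+2-k) * MvPolynomial.X 1 ^ k) := by
    rw [ins2, Finset.sum_insert (by simp)]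
    rw [eulerian_gt (m+1) (m+1+1) (by omega), zero_mul, zero_smul, zero_add]
  rw [sum1, ext1, ext2, ← Finset.sum_add_distrib]
  apply Finset.sum_congr rfl
  intro k hk
  rw [Finset.mem_Icc] at hk
  obtain ⟨j, rfl⟩ : ∃ j, k = j + 1 := ⟨k - 1, by omega⟩
  have h1 : eulerianNum (m+1+1) (j+1)
      = (j+1) * eulerianNum (m+1) (j+1) + (m+1+1-j) * eulerianNum (m+1) j :=
    eulerian_rec (m+1) j
  rw [nsmul_eq_mul, nsmul_eq_mul, mul_assoc, h1]
  have e1 : j + 1 - 1 = j := by omega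
  have e2 : m+1+2-(j+1) = m+1+1-j := by omega
  rw [e1, e2]
  push_cast
  ring

end GrammarAux

/-- For the derivation with `D_G(x) = y`, `D_G(y) = y` on `ℚ[x,y]`,
`(x·D_G)^n(y) = ∑_{i=1}^n A(n,i) x^{n+1-i} y^i`. -/
theorem grammar_eulerian (d : Derivation ℚ (MvPolynomial (Fin 2) ℚ) (MvPolynomial (Fin 2) ℚ))
    (hx : d (MvPolynomial.X 0) = MvPolynomial.X 1)
    (hy : d (MvPolynomial.X 1) = MvPolynomial.X 1)
    (n : ℕ) (hn : 1 ≤ n) :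
    (fun p => MvPolynomial.X 0 * d p)^[n] (MvPolynomial.X 1)
      = ∑ i ∈ Finset.Icc 1 n, (eulerianNum n i : MvPolynomial (Fin 2) ℚ)
          * MvPolynomial.X 0 ^ (n + 1 - i) * MvPolynomial.X 1 ^ i := by
  induction n, hn using Nat.le_induction with
  | base =>
    rw [Function.iterate_one]
    show MvPolynomial.X 0 * d (MvPolynomial.X 1) = _
    rw [hy, Finset.Icc_self, Finset.sum_singleton, eulerian_one]
    norm_num
  | succ n hn ih =>
    rw [Function.iterate_succ_apply', ih]
    exact inductive_step d hx hy n hn
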